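/- Let $a, b, c, d$ be positive real numbers with $a \neq b$, $c \neq d$, and $bc \neq ad$. Then $\int_0^\infty \int_0^\infty \frac{d\alpha_1\, d\alpha_2}{\big[(1+\alpha_1)(a + b\alpha_1 + c\alpha_2 + d\alpha_1\alpha_2)\big]^2} \;=\; \frac{1}{(a-b)(c-d)} \;-\; \frac{1}{bc - ad}\left[ \frac{b^2 \log(a/b)}{(a-b)^2} + \frac{d^2 \log(d/c)}{(c-d)^2} \right]$, where $\log$ is the real natural logarithm. -/

import Mathlib

set_option maxHeartbeats 1000000

open MeasureTheory Set Filter Real Topology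

private lemma inner_deriv' (p q : ℝ) (hp : 0 < p) (hq : 0 < q) (y : ℝ) (hy : 0 ≤ y) :
    HasDerivAt (fun y : ℝ => -(q * (p + q * y))⁻¹) (((p + q * y) ^ 2)⁻¹) y := by
  have hpq : q * (p + q * y) ≠ 0 := by positivity
  have h1 : HasDerivAt (fun y : ℝ => q * (p + q * y)) (q * q) y := by
    simpa using (((hasDerivAt_id y).const_mul q).const_add p).const_mul q
  have : HasDerivAt (fun y : ℝ => -(q * (p + q * y))⁻¹) (-(-(q * q) / (q * (p + q * y)) ^ 2)) y :=
    (h1.inv hpq).neg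
  convert this using 1
  have : p + q * y ≠ 0 := by positivity
  field_simp

private lemma inner_tendsto' (p q : ℝ) (hp : 0 < p) (hq : 0 < q) :
    Tendsto (fun y : ℝ => -(q * (p + q * y))⁻¹) atTop (𝓝 0) := by
  have h1 : Tendsto (fun y : ℝ => q * (p + q * y)) atTop atTop := by
    apply Tendsto.const_mul_atTop hq
    exact tendsto_atTop_add_const_left _ p (Tendsto.const_mul_atTop hq tendsto_id)
  simpa using (h1.inv_tendsto_atTop).neg

private lemma inner_integrable' (p q : ℝ) (hp : 0 < p) (hq : 0 < q) :
    IntegrableOn (fun y => ((p + q * y) ^ 2)⁻¹) (Ioi (0:ℝ)) := by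
  refine integrableOn_Ioi_deriv_of_nonneg ?_ (fun y hy => inner_deriv' p q hp hq y hy.le)
    (fun y hy => by positivity) (inner_tendsto' p q hp hq)
  exact (inner_deriv' p q hp hq 0 le_rfl).continuousAt.continuousWithinAt

private lemma inner_value' (p q : ℝ) (hp : 0 < p) (hq : 0 < q) :
    ∫ y in Ioi (0:ℝ), ((p + q * y) ^ 2)⁻¹ = (p * q)⁻¹ := by
  rw [integral_Ioi_of_hasDerivAt_of_nonneg
    (inner_deriv' p q hp hq 0 le_rfl).continuousAt.continuousWithinAt
    (fun y hy => inner_deriv' p q hp hq y hy.le)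
    (fun y hy => by positivity) (inner_tendsto' p q hp hq)]
  simp [mul_comm]

private noncomputable def Fout (a b c d : ℝ) (x : ℝ) : ℝ :=
  -(1 / ((a - b) * (c - d) * (1 + x)))
  + (b ^ 2 / ((a - b) ^ 2 * (b * c - a * d))) * (Real.log (a + b * x) - Real.log (1 + x))
  - (d ^ 2 / ((c - d) ^ 2 * (b * c - a * d))) * (Real.log (c + d * x) - Real.log (1 + x))

private lemma outer_deriv' (a b c d : ℝ) (ha : 0 < a) (hb : 0 < b) (hc : 0 < c)
    (hd : 0 < d) (hab : a ≠ b) (hcd : c ≠ d) (hbcad : b * c ≠ a * d)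
    (x : ℝ) (hx : 0 ≤ x) :
    HasDerivAt (Fout a b c d) (((1 + x) ^ 2 * (a + b * x) * (c + d * x))⁻¹) x := by
  have h1 : (0:ℝ) < 1 + x := by linarith
  have h2 : (0:ℝ) < a + b * x := by positivity
  have h3 : (0:ℝ) < c + d * x := by positivity
  have hab' : a - b ≠ 0 := sub_ne_zero.2 hab
  have hcd' : c - d ≠ 0 := sub_ne_zero.2 hcd
  have hK : b * c - a * d ≠ 0 := sub_ne_zero.2 hbcad
  have hx1 : HasDerivAt (fun x : ℝ => 1 + x) 1 x := by
    simpa using (hasDerivAt_id x).const_add 1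
  have hx2 : HasDerivAt (fun x : ℝ => a + b * x) b x := by
    simpa using ((hasDerivAt_id x).const_mul b).const_add a
  have hx3 : HasDerivAt (fun x : ℝ => c + d * x) d x := by
    simpa using ((hasDerivAt_id x).const_mul d).const_add c
  have hL1 : HasDerivAt (fun x : ℝ => Real.log (1 + x)) ((1 + x)⁻¹) x := by
    simpa using (hx1.log h1.ne')
  have hL2 : HasDerivAt (fun x : ℝ => Real.log (a + b * x)) (b / (a + b * x)) x := by
    simpa [div_eq_mul_inv, mul_comm] using (hx2.log h2.ne')
  have hL3 : HasDerivAt (fun x : ℝ => Real.log (c + d * x)) (d / (c + d * x)) x := by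
    simpa [div_eq_mul_inv, mul_comm] using (hx3.log h3.ne')
  have hT : HasDerivAt (fun x : ℝ => (a - b) * (c - d) * (1 + x)) ((a - b) * (c - d)) x := by
    simpa using hx1.const_mul ((a - b) * (c - d))
  have hinv : HasDerivAt (fun x : ℝ => -(1 / ((a - b) * (c - d) * (1 + x))))
      ((a - b) * (c - d) / ((a - b) * (c - d) * (1 + x)) ^ 2) x := by
    have hne : (a - b) * (c - d) * (1 + x) ≠ 0 :=
      mul_ne_zero (mul_ne_zero hab' hcd') h1.ne'
    have : HasDerivAt (fun x : ℝ => -((a - b) * (c - d) * (1 + x))⁻¹)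
        (-(-((a - b) * (c - d)) / ((a - b) * (c - d) * (1 + x)) ^ 2)) x := (hT.inv hne).neg
    simpa [one_div, neg_div] using this
  have H := (hinv.add (((hL2.sub hL1).const_mul (b ^ 2 / ((a - b) ^ 2 * (b * c - a * d)))))).sub
      (((hL3.sub hL1).const_mul (d ^ 2 / ((c - d) ^ 2 * (b * c - a * d)))))
  refine H.congr_deriv ?_
  field_simp
  ring

private lemma log_ratio_tendsto' (a b : ℝ) (ha : 0 < a) (hb : 0 < b) :
    Tendsto (fun x : ℝ => Real.log (a + b * x) - Real.log (1 + x)) atTop (𝓝 (Real.log b)) := by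
  have h0 : Tendsto (fun x : ℝ => b + (a - b) / (1 + x)) atTop (𝓝 b) := by
    have h1 : Tendsto (fun x : ℝ => (1 + x : ℝ)) atTop atTop :=
      tendsto_atTop_add_const_left _ 1 tendsto_id
    have h2 : Tendsto (fun x : ℝ => (a - b) / (1 + x)) atTop (𝓝 0) := by
      simpa [div_eq_mul_inv] using h1.inv_tendsto_atTop.const_mul (a - b)
    simpa using tendsto_const_nhds.add h2
  have h3 : Tendsto (fun x : ℝ => Real.log (b + (a - b) / (1 + x))) atTop (𝓝 (Real.log b)) :=
    (Real.continuousAt_log hb.ne').tendsto.comp h0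
  apply h3.congr'
  filter_upwards [eventually_gt_atTop 0] with x hx
  have h1 : (0:ℝ) < 1 + x := by linarith
  have h2 : (0:ℝ) < a + b * x := by positivity
  rw [show b + (a - b) / (1 + x) = (a + b * x) / (1 + x) by field_simp; ring,
    Real.log_div h2.ne' h1.ne']

private lemma outer_tendsto' (a b c d : ℝ) (ha : 0 < a) (hb : 0 < b) (hc : 0 < c) (hd : 0 < d) :
    Tendsto (Fout a b c d) atTop
      (𝓝 ((b ^ 2 / ((a - b) ^ 2 * (b * c - a * d))) * Real.log b
        - (d ^ 2 / ((c - d) ^ 2 * (b * c - a * d))) * Real.log d)) := by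
  have h1 : Tendsto (fun x : ℝ => (1 + x : ℝ)) atTop atTop :=
    tendsto_atTop_add_const_left _ 1 tendsto_id
  have hT1 : Tendsto (fun x : ℝ => -(1 / ((a - b) * (c - d) * (1 + x)))) atTop (𝓝 0) := by
    have : Tendsto (fun x : ℝ => (1 / ((a - b) * (c - d))) * (1 + x)⁻¹) atTop (𝓝 0) := by
      simpa using h1.inv_tendsto_atTop.const_mul (1 / ((a - b) * (c - d)))
    simpa [one_div, mul_inv, mul_comm, mul_left_comm] using this.neg
  have := (hT1.add (((log_ratio_tendsto' a b ha hb).const_mul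
      (b ^ 2 / ((a - b) ^ 2 * (b * c - a * d)))))).sub
    ((log_ratio_tendsto' c d hc hd).const_mul (d ^ 2 / ((c - d) ^ 2 * (b * c - a * d))))
  convert this using 2
  · rfl
  ring

private lemma outer_integrable' (a b c d : ℝ) (ha : 0 < a) (hb : 0 < b) (hc : 0 < c)
    (hd : 0 < d) (hab : a ≠ b) (hcd : c ≠ d) (hbcad : b * c ≠ a * d) :
    IntegrableOn (fun x => ((1 + x) ^ 2 * (a + b * x) * (c + d * x))⁻¹) (Ioi (0:ℝ)) := by
  refine integrableOn_Ioi_deriv_of_nonneg ?_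
    (fun x hx => outer_deriv' a b c d ha hb hc hd hab hcd hbcad x hx.le)
    (fun x hx => by have : (0:ℝ) < x := hx; positivity)
    (outer_tendsto' a b c d ha hb hc hd)
  exact (outer_deriv' a b c d ha hb hc hd hab hcd hbcad 0 le_rfl).continuousAt.continuousWithinAt

private lemma outer_value' (a b c d : ℝ) (ha : 0 < a) (hb : 0 < b) (hc : 0 < c)
    (hd : 0 < d) (hab : a ≠ b) (hcd : c ≠ d) (hbcad : b * c ≠ a * d) :
    ∫ x in Ioi (0:ℝ), ((1 + x) ^ 2 * (a + b * x) * (c + d * x))⁻¹ =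
      1 / ((a - b) * (c - d)) -
        (1 / (b * c - a * d)) *
          (b ^ 2 * Real.log (a / b) / (a - b) ^ 2 +
            d ^ 2 * Real.log (d / c) / (c - d) ^ 2) := by
  rw [integral_Ioi_of_hasDerivAt_of_nonneg
    (outer_deriv' a b c d ha hb hc hd hab hcd hbcad 0 le_rfl).continuousAt.continuousWithinAt
    (fun x hx => outer_deriv' a b c d ha hb hc hd hab hcd hbcad x hx.le)
    (fun x hx => by have : (0:ℝ) < x := hx; positivity)
    (outer_tendsto' a b c d ha hb hc hd)]
  have hab' : a - b ≠ 0 := sub_ne_zero.2 hab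
  have hcd' : c - d ≠ 0 := sub_ne_zero.2 hcd
  have hK : b * c - a * d ≠ 0 := sub_ne_zero.2 hbcad
  simp only [Fout, mul_zero, add_zero, Real.log_one, mul_one,
    Real.log_div ha.ne' hb.ne', Real.log_div hd.ne' hc.ne']
  field_simp
  ring

/-- for positive reals `a, b, c, d` with `a ≠ b`, `c ≠ d` and
`bc ≠ ad`, the Lebesgue integral over `(0,∞)²` of
`1 / [(1+α₁)(a + bα₁ + cα₂ + dα₁α₂)]²` equals
`1/((a-b)(c-d)) - (1/(bc-ad)) [ b² log(a/b)/(a-b)² + d² log(d/c)/(c-d)² ]`. -/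
theorem statement5 (a b c d : ℝ) (ha : 0 < a) (hb : 0 < b) (hc : 0 < c)
    (hd : 0 < d) (hab : a ≠ b) (hcd : c ≠ d) (hbcad : b * c ≠ a * d) :
    (∫ α in (Set.Ioi (0 : ℝ)) ×ˢ (Set.Ioi (0 : ℝ)),
        1 / ((1 + α.1) * (a + b * α.1 + c * α.2 + d * α.1 * α.2)) ^ 2) =
      1 / ((a - b) * (c - d)) -
        (1 / (b * c - a * d)) *
          (b ^ 2 * Real.log (a / b) / (a - b) ^ 2 +
            d ^ 2 * Real.log (d / c) / (c - d) ^ 2) := by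
  have hfg : (fun α : ℝ × ℝ => 1 / ((1 + α.1) * (a + b * α.1 + c * α.2 + d * α.1 * α.2)) ^ 2)
      = fun α : ℝ × ℝ => ((1 + α.1) ^ 2)⁻¹ * (((a + b * α.1) + (c + d * α.1) * α.2) ^ 2)⁻¹ := by
    funext α
    rw [one_div, show a + b * α.1 + c * α.2 + d * α.1 * α.2
      = (a + b * α.1) + (c + d * α.1) * α.2 by ring, mul_pow, mul_inv]
  rw [hfg, Measure.volume_eq_prod ℝ ℝ, ← Measure.prod_restrict]
  have hsec : ∀ x ∈ Ioi (0:ℝ), Integrable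
      (fun y => ((1 + x) ^ 2)⁻¹ * (((a + b * x) + (c + d * x) * y) ^ 2)⁻¹)
      (volume.restrict (Ioi 0)) := by
    intro x hx
    have hx' : (0:ℝ) < x := hx
    have hp : (0:ℝ) < a + b * x := by positivity
    have hq : (0:ℝ) < c + d * x := by positivity
    exact (inner_integrable' _ _ hp hq).const_mul _
  have hval : ∀ x ∈ Ioi (0:ℝ),
      (∫ y in Ioi (0:ℝ), ((1 + x) ^ 2)⁻¹ * (((a + b * x) + (c + d * x) * y) ^ 2)⁻¹)
        = ((1 + x) ^ 2 * (a + b * x) * (c + d * x))⁻¹ := by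
    intro x hx
    have hx' : (0:ℝ) < x := hx
    have hp : (0:ℝ) < a + b * x := by positivity
    have hq : (0:ℝ) < c + d * x := by positivity
    rw [MeasureTheory.integral_const_mul, inner_value' _ _ hp hq, mul_inv, ← mul_assoc, mul_inv, mul_inv]
  have hgm : AEStronglyMeasurable
      (fun α : ℝ × ℝ => ((1 + α.1) ^ 2)⁻¹ * (((a + b * α.1) + (c + d * α.1) * α.2) ^ 2)⁻¹)
      ((volume.restrict (Ioi 0)).prod (volume.restrict (Ioi 0))) := by
    apply Measurable.aestronglyMeasurable
    fun_prop
  have hint : Integrable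
      (fun α : ℝ × ℝ => ((1 + α.1) ^ 2)⁻¹ * (((a + b * α.1) + (c + d * α.1) * α.2) ^ 2)⁻¹)
      ((volume.restrict (Ioi 0)).prod (volume.restrict (Ioi 0))) := by
    rw [integrable_prod_iff hgm]
    constructor
    · filter_upwards [ae_restrict_mem measurableSet_Ioi] with x hx
      exact hsec x hx
    · have hoi : Integrable (fun x => ((1 + x) ^ 2 * (a + b * x) * (c + d * x))⁻¹)
          (volume.restrict (Ioi 0)) := outer_integrable' a b c d ha hb hc hd hab hcd hbcad
      refine hoi.congr ?_
      filter_upwards [ae_restrict_mem measurableSet_Ioi] with x hx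
      rw [show (fun y => ‖((1 + x) ^ 2)⁻¹ * (((a + b * x) + (c + d * x) * y) ^ 2)⁻¹‖)
          = fun y => ((1 + x) ^ 2)⁻¹ * (((a + b * x) + (c + d * x) * y) ^ 2)⁻¹ from
        funext fun y => by rw [Real.norm_eq_abs, abs_of_nonneg (by positivity)]]
      exact (hval x hx).symm
  rw [integral_prod _ hint]
  rw [← outer_value' a b c d ha hb hc hd hab hcd hbcad]
  apply integral_congr_ae
  filter_upwards [ae_restrict_mem measurableSet_Ioi] with x hx
  exact hval x hx
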